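/- Let p, q ∈ ℝⁿ with p ≠ q and let ω ∈ S^{n−1}. The Glassey–Strauss post-collisional variables satisfy the angle formula: (−(p⁰−q⁰)(p′⁰−q′⁰) + (p−q)·(p′−q′))/ϱ² = 1 − 8{ω·(p⁰q − q⁰p)}²/(D₁ ϱ²). -/

import Mathlib

noncomputable section

open MeasureTheory Metric Matrix

namespace RelBoltz

/-- The energy `p⁰ = √(c² + |p|²)` of a relativistic particle with momentum `p ∈ ℝⁿ`. -/
def energy (n : ℕ) (c : ℝ) (p : EuclideanSpace ℝ (Fin n)) : ℝ :=
  Real.sqrt (c ^ 2 + ‖p‖ ^ 2)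

/-- The Euclidean dot product on `ℝⁿ`. -/
def dot (n : ℕ) (p q : EuclideanSpace ℝ (Fin n)) : ℝ := ∑ i, p i * q i

/-- The relative momentum `ϱ(p,q) = √(2(p⁰q⁰ − p·q − c²))`. -/
def relMom (n : ℕ) (c : ℝ) (p q : EuclideanSpace ℝ (Fin n)) : ℝ :=
  Real.sqrt (2 * (energy n c p * energy n c q - dot n p q - c ^ 2))

/-- The quantity `s(p,q) = 2(p⁰q⁰ − p·q + c²)`. -/
def sQ (n : ℕ) (c : ℝ) (p q : EuclideanSpace ℝ (Fin n)) : ℝ :=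
  2 * (energy n c p * energy n c q - dot n p q + c ^ 2)

/-- The Minkowski metric `g = diag(−1, 1, …, 1)` as a `(1+n)×(1+n)` matrix. -/
def eta (n : ℕ) : Matrix (Fin (n + 1)) (Fin (n + 1)) ℝ :=
  Matrix.diagonal fun μ => if μ = 0 then -1 else 1

/-- A proper Lorentz transformation: `det Λ = 1` and `Λᵀ g Λ = g`. -/
def IsLorentz (n : ℕ) (Λ : Matrix (Fin (n + 1)) (Fin (n + 1)) ℝ) : Prop :=
  Λ.det = 1 ∧ Λᵀ * eta n * Λ = eta n

/-- The four-vector `p^μ = (p⁰, p) ∈ ℝ^{1+n}`. -/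
def fourVec (n : ℕ) (c : ℝ) (p : EuclideanSpace ℝ (Fin n)) : Fin (n + 1) → ℝ :=
  Fin.cons (energy n c p) fun i => p i

/-- Condition (CM): `Λ^μ_ν (p^ν + q^ν) = (√s, 0, …, 0)`. -/
def CM (n : ℕ) (c : ℝ) (Λ : Matrix (Fin (n + 1)) (Fin (n + 1)) ℝ)
    (p q : EuclideanSpace ℝ (Fin n)) : Prop :=
  Λ.mulVec (fourVec n c p + fourVec n c q) = Fin.cons (Real.sqrt (sQ n c p q)) (fun _ => (0 : ℝ))

/-- The candidate inverse `g Λᵀ g` of a Lorentz transformation. -/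
def Linv (n : ℕ) (Λ : Matrix (Fin (n + 1)) (Fin (n + 1)) ℝ) :
    Matrix (Fin (n + 1)) (Fin (n + 1)) ℝ :=
  eta n * Λᵀ * eta n

/-- The quantity `ρ = (p⁰+q⁰)/√s` appearing in the boost matrix. -/
def rhoB (n : ℕ) (c : ℝ) (p q : EuclideanSpace ℝ (Fin n)) : ℝ :=
  (energy n c p + energy n c q) / Real.sqrt (sQ n c p q)

/-- The boost matrix `Λ_b = [[ρ, −ρ vᵀ], [−ρ v, Iₙ + (ρ−1) v vᵀ/|v|²]]`
with `v = (p+q)/(p⁰+q⁰)`. -/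
def boost (n : ℕ) (c : ℝ) (p q : EuclideanSpace ℝ (Fin n)) :
    Matrix (Fin (n + 1)) (Fin (n + 1)) ℝ :=
  Matrix.of fun μ ν =>
    Fin.cases
      (Fin.cases (rhoB n c p q)
        (fun j => -rhoB n c p q * ((p j + q j) / (energy n c p + energy n c q))) ν)
      (fun i =>
        Fin.cases (-rhoB n c p q * ((p i + q i) / (energy n c p + energy n c q)))
          (fun j =>
            (if i = j then (1 : ℝ) else 0) +
              (rhoB n c p q - 1) *
                ((p i + q i) / (energy n c p + energy n c q)) *
                ((p j + q j) / (energy n c p + energy n c q)) /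
                (∑ k, ((p k + q k) / (energy n c p + energy n c q)) ^ 2)) ν) μ

/-- The vector `k ∈ ℝⁿ`, `k^i = Λ^i_μ (p^μ − q^μ)` (spatial rows of `Λ` applied
to `p^μ − q^μ`). -/
def kvec (n : ℕ) (c : ℝ) (Λ : Matrix (Fin (n + 1)) (Fin (n + 1)) ℝ)
    (p q : EuclideanSpace ℝ (Fin n)) : EuclideanSpace ℝ (Fin n) :=
  WithLp.toLp 2 fun i => Λ.mulVec (fourVec n c p - fourVec n c q) i.succ

/-- `ω̄^μ = (√s/2, (ϱ/2)ω)`. -/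
def wbar (n : ℕ) (c : ℝ) (p q ω : EuclideanSpace ℝ (Fin n)) : Fin (n + 1) → ℝ :=
  Fin.cons (Real.sqrt (sQ n c p q) / 2) fun i => (relMom n c p q / 2) * ω i

/-- `ω̃^μ = (√s/2, −(ϱ/2)ω)`. -/
def wtil (n : ℕ) (c : ℝ) (p q ω : EuclideanSpace ℝ (Fin n)) : Fin (n + 1) → ℝ :=
  Fin.cons (Real.sqrt (sQ n c p q) / 2) fun i => -(relMom n c p q / 2) * ω i

/-- The center-of-momentum post-collisional four-vector `p′^μ = (Λ⁻¹)^μ_ν ω̄^ν`. -/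
def postP (n : ℕ) (c : ℝ) (Λ : Matrix (Fin (n + 1)) (Fin (n + 1)) ℝ)
    (p q ω : EuclideanSpace ℝ (Fin n)) : Fin (n + 1) → ℝ :=
  (Linv n Λ).mulVec (wbar n c p q ω)

/-- The center-of-momentum post-collisional four-vector `q′^μ = (Λ⁻¹)^μ_ν ω̃^ν`. -/
def postQ (n : ℕ) (c : ℝ) (Λ : Matrix (Fin (n + 1)) (Fin (n + 1)) ℝ)
    (p q ω : EuclideanSpace ℝ (Fin n)) : Fin (n + 1) → ℝ :=
  (Linv n Λ).mulVec (wtil n c p q ω)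

/-- The spatial part of a vector in `ℝ^{1+n}`. -/
def spat (n : ℕ) (u : Fin (n + 1) → ℝ) : EuclideanSpace ℝ (Fin n) :=
  WithLp.toLp 2 fun i => u i.succ

/-- `D₁ = (p⁰+q⁰)² − (ω·(p+q))²`. -/
def D1 (n : ℕ) (c : ℝ) (p q ω : EuclideanSpace ℝ (Fin n)) : ℝ :=
  (energy n c p + energy n c q) ^ 2 - dot n ω (p + q) ^ 2

/-- `D₂ = (p⁰+q⁰){ω·(p⁰q − q⁰p)}`. -/
def D2 (n : ℕ) (c : ℝ) (p q ω : EuclideanSpace ℝ (Fin n)) : ℝ :=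
  (energy n c p + energy n c q) * dot n ω (energy n c p • q - energy n c q • p)

/-- `a(p,q,ω) = 2(p⁰+q⁰){ω·(p⁰q − q⁰p)}/D₁`. -/
def aGS (n : ℕ) (c : ℝ) (p q ω : EuclideanSpace ℝ (Fin n)) : ℝ :=
  2 * (energy n c p + energy n c q) * dot n ω (energy n c p • q - energy n c q • p) /
    D1 n c p q ω

/-- `N⁰(p,q,ω) = 2{ω·(p+q)}{ω·(p⁰q − q⁰p)}/D₁`. -/
def N0 (n : ℕ) (c : ℝ) (p q ω : EuclideanSpace ℝ (Fin n)) : ℝ :=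
  2 * dot n ω (p + q) * dot n ω (energy n c p • q - energy n c q • p) / D1 n c p q ω

/-- The Glassey–Strauss post-collisional momentum `p′ = p + a(p,q,ω)ω`. -/
def gsP (n : ℕ) (c : ℝ) (p q ω : EuclideanSpace ℝ (Fin n)) : EuclideanSpace ℝ (Fin n) :=
  p + aGS n c p q ω • ω

/-- The Glassey–Strauss post-collisional momentum `q′ = q − a(p,q,ω)ω`. -/
def gsQ (n : ℕ) (c : ℝ) (p q ω : EuclideanSpace ℝ (Fin n)) : EuclideanSpace ℝ (Fin n) :=
  q - aGS n c p q ω • ω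

/-- The Glassey–Strauss kernel `B(p,q,ω)`. -/
def BGS (n : ℕ) (c : ℝ) (p q ω : EuclideanSpace ℝ (Fin n)) : ℝ :=
  c * (energy n c p + energy n c q) ^ 2 * energy n c p * energy n c q *
    |dot n ω ((energy n c p)⁻¹ • p - (energy n c q)⁻¹ • q)| / D1 n c p q ω ^ 2

/-- The dimensional factor `A(p,q,ω)`. -/
def AGS (n : ℕ) (c : ℝ) (p q ω : EuclideanSpace ℝ (Fin n)) : ℝ :=
  (4 / relMom n c p q) * (energy n c p + energy n c q) * energy n c p * energy n c q *
    |dot n ω ((energy n c p)⁻¹ • p - (energy n c q)⁻¹ • q)| / D1 n c p q ω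

/-- The dimensional Glassey–Strauss kernel `B_n(p,q,ω) = B(p,q,ω)·(A(p,q,ω))^{n−3}`. -/
def Bn (n : ℕ) (c : ℝ) (p q ω : EuclideanSpace ℝ (Fin n)) : ℝ :=
  BGS n c p q ω * AGS n c p q ω ^ ((n : ℤ) - 3)

/-- The Møller velocity `v_ø(p,q) = (c/4) ϱ √s / (p⁰q⁰)`. -/
def moller (n : ℕ) (c : ℝ) (p q : EuclideanSpace ℝ (Fin n)) : ℝ :=
  (c / 4) * relMom n c p q * Real.sqrt (sQ n c p q) / (energy n c p * energy n c q)

/-- The explicit boost form of the combination appearing in the center-of-momentum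
post-collisional momenta. -/
def cmDir (n : ℕ) (c : ℝ) (p q ω : EuclideanSpace ℝ (Fin n)) : EuclideanSpace ℝ (Fin n) :=
  ω + ((rhoB n c p q - 1) * dot n (p + q) ω / ‖p + q‖ ^ 2) • (p + q)

/-- The explicit boost form of the center-of-momentum post-collisional momentum `p′`. -/
def cmP (n : ℕ) (c : ℝ) (p q ω : EuclideanSpace ℝ (Fin n)) : EuclideanSpace ℝ (Fin n) :=
  (1 / 2 : ℝ) • (p + q) + (relMom n c p q / 2) • cmDir n c p q ω

/-- The explicit boost form of the center-of-momentum post-collisional momentum `q′`. -/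
def cmQ (n : ℕ) (c : ℝ) (p q ω : EuclideanSpace ℝ (Fin n)) : EuclideanSpace ℝ (Fin n) :=
  (1 / 2 : ℝ) • (p + q) - (relMom n c p q / 2) • cmDir n c p q ω

/-- The explicit boost form of the vector `k`. -/
def kB (n : ℕ) (c : ℝ) (p q : EuclideanSpace ℝ (Fin n)) : EuclideanSpace ℝ (Fin n) :=
  (-(energy n c p - energy n c q) / Real.sqrt (sQ n c p q)) • (p + q) + (p - q) +
    ((rhoB n c p q - 1) * dot n (p + q) (p - q) / ‖p + q‖ ^ 2) • (p + q)

/-- The center-of-momentum scattering angle `cos θ_cm = (k/|k|)·ω`. -/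
def cosCM (n : ℕ) (c : ℝ) (p q ω : EuclideanSpace ℝ (Fin n)) : ℝ :=
  dot n (kB n c p q) ω / ‖kB n c p q‖

/-- The Glassey–Strauss scattering angle
`cos θ_gs = 1 − 8{ω·(p⁰q − q⁰p)}²/(D₁ϱ²)`. -/
def cosGS (n : ℕ) (c : ℝ) (p q ω : EuclideanSpace ℝ (Fin n)) : ℝ :=
  1 - 8 * dot n ω (energy n c p • q - energy n c q • p) ^ 2 /
    (D1 n c p q ω * relMom n c p q ^ 2)

/-- The surface measure on the unit sphere `S^{n−1} ⊂ ℝⁿ`. -/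
def sphMeasure (n : ℕ) : Measure (sphere (0 : EuclideanSpace ℝ (Fin n)) 1) :=
  (volume : Measure (EuclideanSpace ℝ (Fin n))).toSphere

open RealInnerProductSpace

lemma dot_eq_inner (n : ℕ) (x y : EuclideanSpace ℝ (Fin n)) : dot n x y = ⟪x, y⟫ := by
  simp [dot, PiLp.inner_apply, RCLike.inner_apply, conj_trivial, mul_comm]

lemma energy_pos {n : ℕ} {c : ℝ} (hc : 0 < c) (p : EuclideanSpace ℝ (Fin n)) :
    0 < energy n c p := Real.sqrt_pos.mpr (by positivity)

lemma energy_sq {n : ℕ} {c : ℝ} (hc : 0 < c) (p : EuclideanSpace ℝ (Fin n)) :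
    energy n c p ^ 2 = c ^ 2 + ‖p‖ ^ 2 := Real.sq_sqrt (by positivity)

lemma norm_lt_energy {n : ℕ} {c : ℝ} (hc : 0 < c) (p : EuclideanSpace ℝ (Fin n)) :
    ‖p‖ < energy n c p := by
  nlinarith [energy_sq hc p, energy_pos hc p, norm_nonneg p]

lemma abs_dot_le {n : ℕ} {ω : EuclideanSpace ℝ (Fin n)} (hω : ‖ω‖ = 1)
    (p : EuclideanSpace ℝ (Fin n)) : |dot n ω p| ≤ ‖p‖ := by
  rw [dot_eq_inner]
  calc |⟪ω, p⟫| ≤ ‖ω‖ * ‖p‖ := abs_real_inner_le_norm ω p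
  _ = ‖p‖ := by rw [hω, one_mul]

lemma D1_pos {n : ℕ} {c : ℝ} (hc : 0 < c) (p q ω : EuclideanSpace ℝ (Fin n))
    (hω : ‖ω‖ = 1) : 0 < D1 n c p q ω := by
  have h1 := abs_dot_le hω (p + q)
  have h2 : ‖p + q‖ ≤ ‖p‖ + ‖q‖ := norm_add_le p q
  have h3 := norm_lt_energy hc p
  have h4 := norm_lt_energy hc q
  have h5 := abs_le.mp h1
  unfold D1
  nlinarith [norm_nonneg (p + q)]

lemma rel_arg_pos {n : ℕ} {c : ℝ} (hc : 0 < c) {p q : EuclideanSpace ℝ (Fin n)}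
    (hpq : p ≠ q) : 0 < 2 * (energy n c p * energy n c q - dot n p q - c ^ 2) := by
  have hP := energy_sq hc p
  have hQ := energy_sq hc q
  have hP0 := energy_pos hc p
  have hQ0 := energy_pos hc q
  have hcs : dot n p q ^ 2 ≤ ‖p‖ ^ 2 * ‖q‖ ^ 2 := by
    rw [dot_eq_inner]
    have h := abs_real_inner_le_norm p q
    have h2 : |⟪p, q⟫| ^ 2 = ⟪p, q⟫ ^ 2 := sq_abs _
    nlinarith [abs_nonneg (⟪p, q⟫), mul_nonneg (norm_nonneg p) (norm_nonneg q)]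
  have hsub : 0 < ‖p - q‖ := norm_sub_pos_iff.mpr hpq
  have hns : ‖p - q‖ ^ 2 = ‖p‖ ^ 2 - 2 * dot n p q + ‖q‖ ^ 2 := by
    rw [dot_eq_inner, norm_sub_sq_real]
  nlinarith [mul_pos hP0 hQ0, sq_nonneg (energy n c p * energy n c q + c ^ 2 + dot n p q),
    mul_pos hc hsub, sq_nonneg ‖p - q‖]

lemma f_pos (P0 Q0 X Y : ℝ) (hP : 0 < P0) (hQ : 0 < Q0) (hX : |X| < P0) :
    0 < P0 * ((P0 + Q0) ^ 2 - (X + Y) ^ 2) + 2 * (X + Y) * (P0 * Y - Q0 * X) := by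
  have h := abs_lt.mp hX
  nlinarith [sq_nonneg (P0 * Y - Q0 * X),
    mul_pos (pow_pos (show (0:ℝ) < P0 + Q0 by linarith) 2)
      (mul_pos (show (0:ℝ) < P0 - X by linarith) (show (0:ℝ) < P0 + X by linarith))]

lemma scalar_en (P0 Q0 PP X Y c D : ℝ) (hP : P0 ^ 2 = c ^ 2 + PP)
    (hD : D = (P0 + Q0) ^ 2 - (X + Y) ^ 2) (hDne : D ≠ 0) :
    c ^ 2 + (PP + 2 * (2 * (P0 + Q0) * (P0 * Y - Q0 * X) / D) * X
      + (2 * (P0 + Q0) * (P0 * Y - Q0 * X) / D) ^ 2)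
      = (P0 + 2 * (X + Y) * (P0 * Y - Q0 * X) / D) ^ 2 := by
  field_simp
  linear_combination (-(D^2))*hP + (-(4*(P0*Y-Q0*X)^2))*hD

lemma scalar_key (P0 Q0 PP QQ PQ X Y c R D N A : ℝ)
    (hP : P0 ^ 2 = c ^ 2 + PP) (hQ : Q0 ^ 2 = c ^ 2 + QQ)
    (hR : R ^ 2 = 2 * (P0 * Q0 - PQ - c ^ 2)) (hDne : D ≠ 0) (hRne : R ≠ 0)
    (hN : N = 2 * (X + Y) * (P0 * Y - Q0 * X) / D)
    (hA : A = 2 * (P0 + Q0) * (P0 * Y - Q0 * X) / D) :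
    (-((P0 - Q0) * ((P0 + N) - (Q0 - N))) + (PP - 2 * PQ + QQ + 2 * A * (X - Y))) / R ^ 2
      = 1 - 8 * (P0 * Y - Q0 * X) ^ 2 / (D * R ^ 2) := by
  subst hN hA
  field_simp
  linear_combination (-D) * hR + (-D) * hP + (-D) * hQ

lemma dot_add_right (n : ℕ) (ω p q : EuclideanSpace ℝ (Fin n)) :
    dot n ω (p + q) = dot n ω p + dot n ω q := by
  simp [dot_eq_inner, inner_add_right]

lemma dot_u (n : ℕ) (c : ℝ) (p q ω : EuclideanSpace ℝ (Fin n)) :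
    dot n ω (energy n c p • q - energy n c q • p)
      = energy n c p * dot n ω q - energy n c q * dot n ω p := by
  simp [dot_eq_inner, inner_sub_right, real_inner_smul_right, Finset.mul_sum, mul_left_comm]

lemma energy_gsP {n : ℕ} {c : ℝ} (hc : 0 < c) (p q ω : EuclideanSpace ℝ (Fin n))
    (hω : ‖ω‖ = 1) :
    energy n c (gsP n c p q ω) = energy n c p + N0 n c p q ω := by
  have hD := D1_pos hc p q ω hω
  have hDne : D1 n c p q ω ≠ 0 := hD.ne'
  have hXY := dot_add_right n ω p q
  have hu := dot_u n c p q ω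
  have hDval : D1 n c p q ω
      = (energy n c p + energy n c q) ^ 2 - (dot n ω p + dot n ω q) ^ 2 := by
    unfold D1; rw [hXY]
  have hNval : N0 n c p q ω = 2 * (dot n ω p + dot n ω q) *
      (energy n c p * dot n ω q - energy n c q * dot n ω p) / D1 n c p q ω := by
    unfold N0; rw [hXY, hu]
  have hAval : aGS n c p q ω = 2 * (energy n c p + energy n c q) *
      (energy n c p * dot n ω q - energy n c q * dot n ω p) / D1 n c p q ω := by
    unfold aGS; rw [hu]
  have hXlt : |dot n ω p| < energy n c p :=
    lt_of_le_of_lt (abs_dot_le hω p) (norm_lt_energy hc p)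
  have hpos0 := f_pos (energy n c p) (energy n c q) (dot n ω p) (dot n ω q)
    (energy_pos hc p) (energy_pos hc q) hXlt
  have hNpos : 0 < energy n c p + N0 n c p q ω := by
    have h2 : energy n c p + N0 n c p q ω
        = (energy n c p * D1 n c p q ω + 2 * (dot n ω p + dot n ω q) *
            (energy n c p * dot n ω q - energy n c q * dot n ω p)) / D1 n c p q ω := by
      rw [hNval]; field_simp
    rw [h2]
    apply div_pos _ hD
    rw [hDval]
    linarith [hpos0]
  have hnormsq : ‖gsP n c p q ω‖ ^ 2
      = ‖p‖ ^ 2 + 2 * aGS n c p q ω * dot n ω p + aGS n c p q ω ^ 2 := by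
    unfold gsP
    rw [norm_add_sq_real, real_inner_smul_right, norm_smul, hω,
      show ⟪p, ω⟫ = dot n ω p by rw [dot_eq_inner, real_inner_comm]]
    simp [sq_abs]
    ring
  have key : c ^ 2 + ‖gsP n c p q ω‖ ^ 2 = (energy n c p + N0 n c p q ω) ^ 2 := by
    rw [hnormsq, hAval, hNval]
    have := scalar_en (energy n c p) (energy n c q) (‖p‖ ^ 2) (dot n ω p) (dot n ω q) c
      (D1 n c p q ω) (energy_sq hc p) hDval hDne
    linarith [this]
  show Real.sqrt _ = _
  rw [key]
  exact Real.sqrt_sq hNpos.le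

lemma aGS_swap (n : ℕ) (c : ℝ) (p q ω : EuclideanSpace ℝ (Fin n)) :
    aGS n c q p ω = -aGS n c p q ω := by
  unfold aGS D1
  rw [dot_u, dot_u, dot_add_right, dot_add_right]
  ring

lemma N0_swap (n : ℕ) (c : ℝ) (p q ω : EuclideanSpace ℝ (Fin n)) :
    N0 n c q p ω = -N0 n c p q ω := by
  unfold N0 D1
  rw [dot_u, dot_u, dot_add_right, dot_add_right]
  ring

lemma gsQ_eq (n : ℕ) (c : ℝ) (p q ω : EuclideanSpace ℝ (Fin n)) :
    gsQ n c p q ω = gsP n c q p ω := by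
  unfold gsQ gsP
  rw [aGS_swap]
  module

/-- the Glassey–Strauss post-collisional variables satisfy the angle
formula `(−(p⁰−q⁰)(p′⁰−q′⁰) + (p−q)·(p′−q′))/ϱ² = 1 − 8{ω·(p⁰q − q⁰p)}²/(D₁ϱ²)`. -/
theorem statement13 (n : ℕ) (hn : 2 ≤ n) (c : ℝ) (hc : 0 < c)
    (p q : EuclideanSpace ℝ (Fin n)) (hpq : p ≠ q)
    (ω : EuclideanSpace ℝ (Fin n)) (hω : ‖ω‖ = 1) :
    (-((energy n c p - energy n c q) *
          (energy n c (gsP n c p q ω) - energy n c (gsQ n c p q ω))) +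
        dot n (p - q) (gsP n c p q ω - gsQ n c p q ω)) / relMom n c p q ^ 2 =
    1 - 8 * dot n ω (energy n c p • q - energy n c q • p) ^ 2 /
        (D1 n c p q ω * relMom n c p q ^ 2) := by
  have hD := D1_pos hc p q ω hω
  have hRarg := rel_arg_pos hc hpq
  have hR2 : relMom n c p q ^ 2
      = 2 * (energy n c p * energy n c q - dot n p q - c ^ 2) := Real.sq_sqrt hRarg.le
  have hRne : relMom n c p q ≠ 0 := (Real.sqrt_pos.mpr hRarg).ne'
  have hEP := energy_gsP hc p q ω hω
  have hEQ : energy n c (gsQ n c p q ω) = energy n c q - N0 n c p q ω := by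
    rw [gsQ_eq, energy_gsP hc q p ω hω, N0_swap]; ring
  have hNval : N0 n c p q ω = 2 * (dot n ω p + dot n ω q) *
      (energy n c p * dot n ω q - energy n c q * dot n ω p) / D1 n c p q ω := by
    unfold N0; rw [dot_add_right, dot_u]
  have hAval : aGS n c p q ω = 2 * (energy n c p + energy n c q) *
      (energy n c p * dot n ω q - energy n c q * dot n ω p) / D1 n c p q ω := by
    unfold aGS; rw [dot_u]
  have hdiff : gsP n c p q ω - gsQ n c p q ω = (p - q) + (2 * aGS n c p q ω) • ω := by
    unfold gsP gsQ; module
  have hdot : dot n (p - q) (gsP n c p q ω - gsQ n c p q ω)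
      = ‖p‖ ^ 2 - 2 * dot n p q + ‖q‖ ^ 2
        + 2 * aGS n c p q ω * (dot n ω p - dot n ω q) := by
    rw [hdiff]
    simp only [dot_eq_inner, inner_add_right, inner_sub_left, inner_sub_right,
      real_inner_smul_right, real_inner_self_eq_norm_sq]
    linear_combination real_inner_comm q p + (-2 * aGS n c p q ω) * real_inner_comm p ω
      + (2 * aGS n c p q ω) * real_inner_comm q ω
  rw [hEP, hEQ, hdot, dot_u]
  exact scalar_key (energy n c p) (energy n c q) (‖p‖ ^ 2) (‖q‖ ^ 2) (dot n p q)
    (dot n ω p) (dot n ω q) c (relMom n c p q) (D1 n c p q ω) (N0 n c p q ω)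
    (aGS n c p q ω) (energy_sq hc p) (energy_sq hc q) hR2 hD.ne' hRne hNval hAval


end RelBoltz
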